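/- Let n be a natural number, let λ : Fin n → ℝ be a monotone (nondecreasing) family of strictly positive real numbers with ∏ i, λ i = 1, and let p be an index such that λ i ≤ 1 for all i ≤ p and λ i > 1 for all i > p. Then ∑_{i ≤ p} (λ i)² · |ln (λ i)| ≤ (λ p)² · ∑_{i > p} ln (λ i). -/

import Mathlib

theorem sum_sq_abs_log_le_lambda_p_sq_mul_sum_log
    (n : ℕ) (l : Fin n → ℝ) (p : Fin n)
    (hpos : ∀ i, 0 < l i)
    (hmono : Monotone l)
    (hprod : ∏ i, l i = 1)
    (hle : ∀ i ≤ p, l i ≤ 1)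
    (hgt : ∀ i > p, 1 < l i) :
    ∑ i ∈ Finset.univ.filter (fun i => i ≤ p), (l i) ^ 2 * |Real.log (l i)|
      ≤ (l p) ^ 2 * ∑ i ∈ Finset.univ.filter (fun i => p < i), Real.log (l i) := by
  have hzero : ∑ i, Real.log (l i) = 0 := by
    rw [← Real.log_prod (fun i _ => (hpos i).ne'), hprod, Real.log_one]
  have hsplit : ∑ i ∈ Finset.univ.filter (fun i => i ≤ p), Real.log (l i)
      + ∑ i ∈ Finset.univ.filter (fun i => p < i), Real.log (l i) = 0 := by
    rw [← hzero]
    rw [← Finset.sum_filter_add_sum_filter_not Finset.univ (fun i => i ≤ p)]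
    congr 1
    apply Finset.sum_congr _ (fun _ _ => rfl)
    ext i; simp [not_le]
  have key : ∑ i ∈ Finset.univ.filter (fun i => i ≤ p), (l i) ^ 2 * |Real.log (l i)|
      ≤ ∑ i ∈ Finset.univ.filter (fun i => i ≤ p), (l p) ^ 2 * (-Real.log (l i)) := by
    apply Finset.sum_le_sum
    intro i hi
    simp only [Finset.mem_filter] at hi
    have hli : l i ≤ 1 := hle i hi.2
    have hlog : Real.log (l i) ≤ 0 := Real.log_nonpos (hpos i).le hli
    rw [abs_of_nonpos hlog]
    apply mul_le_mul_of_nonneg_right _ (by linarith)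
    exact pow_le_pow_left₀ (hpos i).le (hmono hi.2) 2
  calc ∑ i ∈ Finset.univ.filter (fun i => i ≤ p), (l i) ^ 2 * |Real.log (l i)|
      ≤ ∑ i ∈ Finset.univ.filter (fun i => i ≤ p), (l p) ^ 2 * (-Real.log (l i)) := key
    _ = (l p) ^ 2 * ∑ i ∈ Finset.univ.filter (fun i => p < i), Real.log (l i) := by
        rw [← Finset.mul_sum, Finset.sum_neg_distrib]
        congr 1
        linarith
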